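/- The matching map ψ is a bijection from the set of clique vectors for H onto the set of matchings of W(H). In particular, for every clique vector v, the set of edges ψ(v) is a matching of W(H). -/

import Mathlib

open Finset Filter Pointwise

/-- Neighbors in the right shore `T` of a left vertex `i`. -/
def Nbr (E : Finset (ℕ × ℕ)) (i : ℕ) : Finset ℕ :=
  (E.filter (fun p => p.1 = i)).image Prod.snd

/-- Neighbors in the left shore `S` of a right vertex `j`. -/
def Nbr' (E : Finset (ℕ × ℕ)) (j : ℕ) : Finset ℕ :=
  (E.filter (fun p => p.2 = j)).image Prod.fst

/-- A clique vector `(f, g, s)` for the bipartite graph `H`; values outside the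
domains are normalized (to `0`, resp. `false`). -/
structure CliqueVec (n m : ℕ) (E : Finset (ℕ × ℕ)) where
  f : ℕ → ℕ
  g : ℕ → ℕ
  s : ℕ × ℕ → Bool
  hf : ∀ i ∈ Finset.Icc 1 n, (i, f i) ∈ E
  hg : ∀ j ∈ Finset.Icc 1 m, (g j, j) ∈ E
  hs : ∀ p ∈ E, s p = true → f p.1 = p.2 ∧ g p.2 = p.1
  hf' : ∀ i ∉ Finset.Icc 1 n, f i = 0
  hg' : ∀ j ∉ Finset.Icc 1 m, g j = 0
  hs' : ∀ p ∉ E, s p = false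

/-- Edges of the almost-degree-whiskered graph `W(H)`:
`Sum.inl (i,j)` is the edge `{i,j}` of `H`;
`Sum.inr (Sum.inl (i,j))` is the pendant edge `{i, w_{i,j}}`;
`Sum.inr (Sum.inr (j,i))` is the pendant edge `{j, w'_{j,i}}`. -/
abbrev WEdge : Type := (ℕ × ℕ) ⊕ ((ℕ × ℕ) ⊕ (ℕ × ℕ))

def IsWEdge (E : Finset (ℕ × ℕ)) : WEdge → Prop
  | Sum.inl p => p ∈ E
  | Sum.inr (Sum.inl p) => p ∈ E ∧ ∃ j' ∈ Nbr E p.1, j' < p.2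
  | Sum.inr (Sum.inr q) => (q.2, q.1) ∈ E ∧ ∃ i' ∈ Nbr' E q.1, q.2 < i'

/-- The `H`-vertex of the left shore covered by an edge of `W(H)`, if any. -/
def leftV : WEdge → Option ℕ
  | Sum.inl p => some p.1
  | Sum.inr (Sum.inl p) => some p.1
  | Sum.inr (Sum.inr _) => none

/-- The `H`-vertex of the right shore covered by an edge of `W(H)`, if any. -/
def rightV : WEdge → Option ℕ
  | Sum.inl p => some p.2
  | Sum.inr (Sum.inl _) => none
  | Sum.inr (Sum.inr q) => some q.1

/-- A matching of `W(H)`: a set of pairwise disjoint edges of `W(H)`.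
(Leaf vertices are covered by at most one edge label automatically.) -/
def IsMatching (E : Finset (ℕ × ℕ)) (M : Set WEdge) : Prop :=
  (∀ e ∈ M, IsWEdge E e) ∧
  ∀ e ∈ M, ∀ e' ∈ M, e ≠ e' →
    (leftV e = none ∨ leftV e ≠ leftV e') ∧
    (rightV e = none ∨ rightV e ≠ rightV e')

/-- `mCount E k` is `m_k`, the number of `k`-matchings of `W(H)`. -/
noncomputable def mCount (E : Finset (ℕ × ℕ)) (k : ℕ) : ℕ :=
  {M : Set WEdge | IsMatching E M ∧ M.ncard = k}.ncard

/-- The matching map `ψ`. -/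
def psi {n m : ℕ} {E : Finset (ℕ × ℕ)} (v : CliqueVec n m E) : Set WEdge :=
  { e | (∃ i ∈ Finset.Icc 1 n, v.g (v.f i) ≠ i ∧ (∃ j' ∈ Nbr E i, j' < v.f i) ∧
          e = Sum.inr (Sum.inl (i, v.f i))) ∨
        (∃ j ∈ Finset.Icc 1 m, v.f (v.g j) ≠ j ∧ (∃ i' ∈ Nbr' E j, v.g j < i') ∧
          e = Sum.inr (Sum.inr (j, v.g j))) ∨
        (∃ p ∈ E, v.f p.1 = p.2 ∧ v.g p.2 = p.1 ∧ v.s p = false ∧ e = Sum.inl p) ∨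
        (∃ p ∈ E, v.f p.1 = p.2 ∧ v.g p.2 = p.1 ∧ v.s p = true ∧
          (((∃ j' ∈ Nbr E p.1, j' < p.2) ∧ e = Sum.inr (Sum.inl p)) ∨
           ((∃ i' ∈ Nbr' E p.2, p.1 < i') ∧ e = Sum.inr (Sum.inr (p.2, p.1))))) }


section Aux
variable {n m : ℕ} {E : Finset (ℕ × ℕ)}

lemma mem_Nbr {i j : ℕ} : j ∈ Nbr E i ↔ (i, j) ∈ E := by
  simp only [Nbr, Finset.mem_image, Finset.mem_filter]
  constructor
  · rintro ⟨⟨a, b⟩, ⟨hE, rfl⟩, rfl⟩; exact hE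
  · intro h; exact ⟨(i, j), ⟨h, rfl⟩, rfl⟩

lemma mem_Nbr' {i j : ℕ} : i ∈ Nbr' E j ↔ (i, j) ∈ E := by
  simp only [Nbr', Finset.mem_image, Finset.mem_filter]
  constructor
  · rintro ⟨⟨a, b⟩, ⟨hE, rfl⟩, rfl⟩; exact hE
  · intro h; exact ⟨(i, j), ⟨h, rfl⟩, rfl⟩

/-- Lemma A: characterization of `H`-edges in `ψ(v)`. -/
lemma lemA (v : CliqueVec n m E) {a b : ℕ} :
    Sum.inl (a, b) ∈ psi v ↔
      (a, b) ∈ E ∧ v.f a = b ∧ v.g b = a ∧ v.s (a, b) = false := by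
  constructor
  · intro h
    rcases h with ⟨i, _, _, _, h⟩ | ⟨j, _, _, _, h⟩ | ⟨p, hp, h1, h2, h3, h⟩ |
      ⟨p, hp, h1, h2, h3, (⟨_, h⟩ | ⟨_, h⟩)⟩
    · exact absurd h (by simp)
    · exact absurd h (by simp)
    · injection h with h
      obtain rfl : p = (a, b) := h.symm
      exact ⟨hp, h1, h2, h3⟩
    · exact absurd h (by simp)
    · exact absurd h (by simp)
  · rintro ⟨hp, h1, h2, h3⟩
    exact Or.inr (Or.inr (Or.inl ⟨(a, b), hp, h1, h2, h3, rfl⟩))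

/-- Lemma B: characterization of left-whisker edges in `ψ(v)`. -/
lemma lemB (v : CliqueVec n m E)
    (hE : ∀ p ∈ E, 1 ≤ p.1 ∧ p.1 ≤ n ∧ 1 ≤ p.2 ∧ p.2 ≤ m) {a b : ℕ} :
    Sum.inr (Sum.inl (a, b)) ∈ psi v ↔
      a ∈ Finset.Icc 1 n ∧ v.f a = b ∧ (∃ j' ∈ Nbr E a, j' < b) ∧
        (v.g b = a → v.s (a, b) = true) := by
  constructor
  · intro h
    rcases h with ⟨i, hi, hgi, hex, h⟩ | ⟨j, _, _, _, h⟩ | ⟨p, hp, h1, h2, h3, h⟩ |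
      ⟨p, hp, h1, h2, h3, (⟨hex, h⟩ | ⟨_, h⟩)⟩
    · injection h with h; injection h with h
      rw [Prod.mk.injEq] at h
      obtain ⟨rfl, rfl⟩ := h
      exact ⟨hi, rfl, hex, fun hg => (hgi hg).elim⟩
    · exact absurd h (by simp)
    · exact absurd h (by simp)
    · injection h with h; injection h with h
      obtain rfl : p = (a, b) := h.symm
      have hIcc : a ∈ Finset.Icc 1 n := by
        have := hE _ hp; exact Finset.mem_Icc.mpr ⟨this.1, this.2.1⟩
      exact ⟨hIcc, h1, hex, fun _ => h3⟩
    · exact absurd h (by simp)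
  · rintro ⟨hIcc, h1, hex, himp⟩
    by_cases hg : v.g b = a
    · refine Or.inr (Or.inr (Or.inr ⟨(a, b), ?_, h1, hg, himp hg, Or.inl ⟨hex, rfl⟩⟩))
      subst h1; exact v.hf a hIcc
    · exact Or.inl ⟨a, hIcc, fun hc => hg (h1 ▸ hc), h1 ▸ hex, by rw [h1]⟩

/-- Lemma C: characterization of right-whisker edges in `ψ(v)`. -/
lemma lemC (v : CliqueVec n m E)
    (hE : ∀ p ∈ E, 1 ≤ p.1 ∧ p.1 ≤ n ∧ 1 ≤ p.2 ∧ p.2 ≤ m) {a b : ℕ} :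
    Sum.inr (Sum.inr (b, a)) ∈ psi v ↔
      b ∈ Finset.Icc 1 m ∧ v.g b = a ∧ (∃ i' ∈ Nbr' E b, a < i') ∧
        (v.f a = b → v.s (a, b) = true) := by
  constructor
  · intro h
    rcases h with ⟨i, _, _, _, h⟩ | ⟨j, hj, hfj, hex, h⟩ | ⟨p, hp, h1, h2, h3, h⟩ |
      ⟨p, hp, h1, h2, h3, (⟨_, h⟩ | ⟨hex, h⟩)⟩
    · exact absurd h (by simp)
    · injection h with h; injection h with h
      rw [Prod.mk.injEq] at h
      obtain ⟨rfl, rfl⟩ := h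
      exact ⟨hj, rfl, hex, fun hf => (hfj hf).elim⟩
    · exact absurd h (by simp)
    · exact absurd h (by simp)
    · injection h with h; injection h with h
      rw [Prod.mk.injEq] at h
      obtain ⟨rfl, rfl⟩ := h
      have hIcc : p.2 ∈ Finset.Icc 1 m := by
        have := hE _ hp; exact Finset.mem_Icc.mpr ⟨this.2.2.1, this.2.2.2⟩
      exact ⟨hIcc, h2, hex, fun _ => h3⟩
  · rintro ⟨hIcc, h2, hex, himp⟩
    by_cases hf : v.f a = b
    · refine Or.inr (Or.inr (Or.inr ⟨(a, b), ?_, hf, h2, himp hf, Or.inr ⟨hex, rfl⟩⟩))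
      subst h2; exact v.hg b hIcc
    · exact Or.inr (Or.inl ⟨b, hIcc, fun hc => hf (h2 ▸ hc), h2 ▸ hex, by rw [h2]⟩)

end Aux
section Match
variable {n m : ℕ} {E : Finset (ℕ × ℕ)}

lemma psi_uniqL (v : CliqueVec n m E)
    (hE : ∀ p ∈ E, 1 ≤ p.1 ∧ p.1 ≤ n ∧ 1 ≤ p.2 ∧ p.2 ≤ m) :
    ∀ e ∈ psi v, ∀ e' ∈ psi v, leftV e = leftV e' → leftV e ≠ none → e = e' := by
  rintro (⟨a, b⟩ | ⟨a, b⟩ | ⟨b, a⟩) he (⟨a', b'⟩ | ⟨a', b'⟩ | ⟨b', a'⟩) he' heq hne <;>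
    simp only [leftV, ne_eq, Option.some.injEq, reduceCtorEq] at heq hne
  · obtain rfl := heq
    obtain ⟨_, hf, _, _⟩ := (lemA v).mp he
    obtain ⟨_, hf', _, _⟩ := (lemA v).mp he'
    rw [hf.symm.trans hf']
  · obtain rfl := heq
    obtain ⟨_, hf, hg, hs⟩ := (lemA v).mp he
    obtain ⟨_, hf', _, himp⟩ := (lemB v hE).mp he'
    obtain rfl := hf.symm.trans hf'
    rw [himp hg] at hs; exact absurd hs (by simp)
  · obtain rfl := heq
    obtain ⟨_, hf', hg, hs⟩ := (lemA v).mp he'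
    obtain ⟨_, hf, _, himp⟩ := (lemB v hE).mp he
    obtain rfl := hf'.symm.trans hf
    rw [himp hg] at hs; exact absurd hs (by simp)
  · obtain rfl := heq
    obtain ⟨_, hf, _, _⟩ := (lemB v hE).mp he
    obtain ⟨_, hf', _, _⟩ := (lemB v hE).mp he'
    rw [hf.symm.trans hf']
  · exact absurd trivial hne

lemma psi_uniqR (v : CliqueVec n m E)
    (hE : ∀ p ∈ E, 1 ≤ p.1 ∧ p.1 ≤ n ∧ 1 ≤ p.2 ∧ p.2 ≤ m) :
    ∀ e ∈ psi v, ∀ e' ∈ psi v, rightV e = rightV e' → rightV e ≠ none → e = e' := by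
  rintro (⟨a, b⟩ | ⟨a, b⟩ | ⟨b, a⟩) he (⟨a', b'⟩ | ⟨a', b'⟩ | ⟨b', a'⟩) he' heq hne <;>
    simp only [rightV, ne_eq, Option.some.injEq, reduceCtorEq] at heq hne
  · obtain rfl := heq
    obtain ⟨_, _, hg, _⟩ := (lemA v).mp he
    obtain ⟨_, _, hg', _⟩ := (lemA v).mp he'
    rw [hg.symm.trans hg']
  · obtain rfl := heq
    obtain ⟨_, hf, hg, hs⟩ := (lemA v).mp he
    obtain ⟨_, hg', _, himp⟩ := (lemC v hE).mp he'
    obtain rfl := hg.symm.trans hg'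
    rw [himp hf] at hs; exact absurd hs (by simp)
  · exact absurd trivial hne
  · obtain rfl := heq
    obtain ⟨_, hf, hg, hs⟩ := (lemA v).mp he'
    obtain ⟨_, hg', _, himp⟩ := (lemC v hE).mp he
    obtain rfl := hg.symm.trans hg'
    rw [himp hf] at hs; exact absurd hs (by simp)
  · obtain rfl := heq
    obtain ⟨_, hg, _, _⟩ := (lemC v hE).mp he
    obtain ⟨_, hg', _, _⟩ := (lemC v hE).mp he'
    rw [hg.symm.trans hg']

lemma psi_isMatching (v : CliqueVec n m E)
    (hE : ∀ p ∈ E, 1 ≤ p.1 ∧ p.1 ≤ n ∧ 1 ≤ p.2 ∧ p.2 ≤ m) :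
    IsMatching E (psi v) := by
  constructor
  · rintro (⟨a, b⟩ | ⟨a, b⟩ | ⟨b, a⟩) he
    · exact ((lemA v).mp he).1
    · obtain ⟨hIcc, hf, hex, _⟩ := (lemB v hE).mp he
      exact ⟨hf ▸ v.hf a hIcc, hex⟩
    · obtain ⟨hIcc, hg, hex, _⟩ := (lemC v hE).mp he
      exact ⟨hg ▸ v.hg b hIcc, hex⟩
  · intro e he e' he' hne
    constructor
    · by_cases h : leftV e = none
      · exact Or.inl h
      · exact Or.inr fun heq => hne (psi_uniqL v hE e he e' he' heq h)
    · by_cases h : rightV e = none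
      · exact Or.inl h
      · exact Or.inr fun heq => hne (psi_uniqR v hE e he e' he' heq h)

end Match
section Inj
variable {n m : ℕ} {E : Finset (ℕ × ℕ)}

lemma f_rec (v v' : CliqueVec n m E)
    (hE : ∀ p ∈ E, 1 ≤ p.1 ∧ p.1 ≤ n ∧ 1 ≤ p.2 ∧ p.2 ≤ m)
    (hpsi : psi v = psi v') {i : ℕ} (hi : i ∈ Finset.Icc 1 n) :
    v'.f i = v.f i ∨ ¬∃ j' ∈ Nbr E i, j' < v.f i := by
  by_cases hc : v.g (v.f i) = i ∧ v.s (i, v.f i) = false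
  · have hmem : Sum.inl (i, v.f i) ∈ psi v :=
      (lemA v).mpr ⟨v.hf i hi, rfl, hc.1, hc.2⟩
    rw [hpsi] at hmem
    exact Or.inl ((lemA v').mp hmem).2.1
  · by_cases hex : ∃ j' ∈ Nbr E i, j' < v.f i
    · have himp : v.g (v.f i) = i → v.s (i, v.f i) = true := by
        intro hg
        rcases Bool.eq_false_or_eq_true (v.s (i, v.f i)) with h | h
        · exact h
        · exact absurd ⟨hg, h⟩ hc
      have hmem : Sum.inr (Sum.inl (i, v.f i)) ∈ psi v :=
        (lemB v hE).mpr ⟨hi, rfl, hex, himp⟩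
      rw [hpsi] at hmem
      exact Or.inl ((lemB v' hE).mp hmem).2.1
    · exact Or.inr hex

lemma g_rec (v v' : CliqueVec n m E)
    (hE : ∀ p ∈ E, 1 ≤ p.1 ∧ p.1 ≤ n ∧ 1 ≤ p.2 ∧ p.2 ≤ m)
    (hpsi : psi v = psi v') {j : ℕ} (hj : j ∈ Finset.Icc 1 m) :
    v'.g j = v.g j ∨ ¬∃ i' ∈ Nbr' E j, v.g j < i' := by
  by_cases hc : v.f (v.g j) = j ∧ v.s (v.g j, j) = false
  · have hmem : Sum.inl (v.g j, j) ∈ psi v :=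
      (lemA v).mpr ⟨v.hg j hj, hc.1, rfl, hc.2⟩
    rw [hpsi] at hmem
    exact Or.inl ((lemA v').mp hmem).2.2.1
  · by_cases hex : ∃ i' ∈ Nbr' E j, v.g j < i'
    · have himp : v.f (v.g j) = j → v.s (v.g j, j) = true := by
        intro hf
        rcases Bool.eq_false_or_eq_true (v.s (v.g j, j)) with h | h
        · exact h
        · exact absurd ⟨hf, h⟩ hc
      have hmem : Sum.inr (Sum.inr (j, v.g j)) ∈ psi v :=
        (lemC v hE).mpr ⟨hj, rfl, hex, himp⟩
      rw [hpsi] at hmem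
      exact Or.inl ((lemC v' hE).mp hmem).2.1
    · exact Or.inr hex

lemma psi_inj (hE : ∀ p ∈ E, 1 ≤ p.1 ∧ p.1 ≤ n ∧ 1 ≤ p.2 ∧ p.2 ≤ m) :
    Function.Injective (psi : CliqueVec n m E → Set WEdge) := by
  intro v v' hpsi
  have hf_eq : ∀ i, v.f i = v'.f i := by
    intro i
    by_cases hi : i ∈ Finset.Icc 1 n
    · rcases f_rec v v' hE hpsi hi with h | h1
      · exact h.symm
      rcases f_rec v' v hE hpsi.symm hi with h | h2
      · exact h
      have m1 : v.f i ∈ Nbr E i := mem_Nbr.mpr (v.hf i hi)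
      have m2 : v'.f i ∈ Nbr E i := mem_Nbr.mpr (v'.hf i hi)
      have n1 : ¬ v'.f i < v.f i := fun hlt => h1 ⟨v'.f i, m2, hlt⟩
      have n2 : ¬ v.f i < v'.f i := fun hlt => h2 ⟨v.f i, m1, hlt⟩
      omega
    · rw [v.hf' i hi, v'.hf' i hi]
  have hg_eq : ∀ j, v.g j = v'.g j := by
    intro j
    by_cases hj : j ∈ Finset.Icc 1 m
    · rcases g_rec v v' hE hpsi hj with h | h1
      · exact h.symm
      rcases g_rec v' v hE hpsi.symm hj with h | h2
      · exact h
      have m1 : v.g j ∈ Nbr' E j := mem_Nbr'.mpr (v.hg j hj)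
      have m2 : v'.g j ∈ Nbr' E j := mem_Nbr'.mpr (v'.hg j hj)
      have n1 : ¬ v.g j < v'.g j := fun hlt => h1 ⟨v'.g j, m2, hlt⟩
      have n2 : ¬ v'.g j < v.g j := fun hlt => h2 ⟨v.g j, m1, hlt⟩
      omega
    · rw [v.hg' j hj, v'.hg' j hj]
  have hs_char : ∀ (w : CliqueVec n m E) (p : ℕ × ℕ), p ∈ E →
      (w.s p = true ↔ (w.f p.1 = p.2 ∧ w.g p.2 = p.1 ∧ Sum.inl p ∉ psi w)) := by
    intro w p hp
    constructor
    · intro hs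
      obtain ⟨h1, h2⟩ := w.hs p hp hs
      refine ⟨h1, h2, fun hmem => ?_⟩
      have := ((lemA w (a := p.1) (b := p.2)).mp (by simpa using hmem)).2.2.2
      rw [hs] at this; exact absurd this (by simp)
    · rintro ⟨h1, h2, h3⟩
      rcases Bool.eq_false_or_eq_true (w.s p) with h | h
      · exact h
      · exact absurd ((lemA w (a := p.1) (b := p.2)).mpr
          ⟨by simpa using hp, h1, h2, by simpa using h⟩) (by simpa using h3)
  have hs_eq : ∀ p, v.s p = v'.s p := by
    intro p
    by_cases hp : p ∈ E
    · rcases Bool.eq_false_or_eq_true (v'.s p) with h | h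
      · obtain ⟨c1, c2, c3⟩ := (hs_char v' p hp).mp h
        have : v.s p = true := (hs_char v p hp).mpr
          ⟨(hf_eq p.1).symm ▸ c1, (hg_eq p.2).symm ▸ c2, hpsi.symm ▸ c3⟩
        rw [this, h]
      · rcases Bool.eq_false_or_eq_true (v.s p) with h2 | h2
        · obtain ⟨c1, c2, c3⟩ := (hs_char v p hp).mp h2
          have : v'.s p = true := (hs_char v' p hp).mpr
            ⟨(hf_eq p.1) ▸ c1, (hg_eq p.2) ▸ c2, hpsi ▸ c3⟩
          rw [this, h2]
        · rw [h, h2]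
    · rw [v.hs' p hp, v'.hs' p hp]
  cases v; cases v'
  simp only [CliqueVec.mk.injEq]
  exact ⟨funext hf_eq, funext hg_eq, funext hs_eq⟩

end Inj
section Surj
variable {n m : ℕ} {E : Finset (ℕ × ℕ)}

open Classical in
/-- `f` recovered from a matching `M`. -/
noncomputable def Fm (n : ℕ) (E : Finset (ℕ × ℕ)) (M : Set WEdge)
    (hne : ∀ i ∈ Finset.Icc 1 n, (Nbr E i).Nonempty) : ℕ → ℕ := fun i =>
  if h : i ∈ Finset.Icc 1 n then
    if h2 : ∃ j, Sum.inl (i, j) ∈ M then h2.choose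
    else if h3 : ∃ j, Sum.inr (Sum.inl (i, j)) ∈ M then h3.choose
    else (Nbr E i).min' (hne i h)
  else 0

open Classical in
/-- `g` recovered from a matching `M`. -/
noncomputable def Gm (m : ℕ) (E : Finset (ℕ × ℕ)) (M : Set WEdge)
    (hne : ∀ j ∈ Finset.Icc 1 m, (Nbr' E j).Nonempty) : ℕ → ℕ := fun j =>
  if h : j ∈ Finset.Icc 1 m then
    if h2 : ∃ i, Sum.inl (i, j) ∈ M then h2.choose
    else if h3 : ∃ i, Sum.inr (Sum.inr (j, i)) ∈ M then h3.choose
    else (Nbr' E j).max' (hne j h)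
  else 0

variable {M : Set WEdge}

lemma M_uniqL (hM : IsMatching E M) (e : WEdge) (he : e ∈ M) (e' : WEdge) (he' : e' ∈ M)
    (heq : leftV e = leftV e') (hne : leftV e ≠ none) : e = e' := by
  by_cases h : e = e'
  · exact h
  · rcases (hM.2 e he e' he' h).1 with h1 | h1
    · exact absurd h1 hne
    · exact absurd heq h1

lemma M_uniqR (hM : IsMatching E M) (e : WEdge) (he : e ∈ M) (e' : WEdge) (he' : e' ∈ M)
    (heq : rightV e = rightV e') (hne : rightV e ≠ none) : e = e' := by
  by_cases h : e = e'
  · exact h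
  · rcases (hM.2 e he e' he' h).2 with h1 | h1
    · exact absurd h1 hne
    · exact absurd heq h1

lemma Fm_inl (hM : IsMatching E M) (hne : ∀ i ∈ Finset.Icc 1 n, (Nbr E i).Nonempty) {i j : ℕ} (hij : Sum.inl (i, j) ∈ M) (hi : i ∈ Finset.Icc 1 n) :
    Fm n E M hne i = j := by
  have h2 : ∃ j', Sum.inl (i, j') ∈ M := ⟨j, hij⟩
  have hch := h2.choose_spec
  have := M_uniqL hM _ hch _ hij (by simp [leftV]) (by simp [leftV])
  simp only [Sum.inl.injEq, Prod.mk.injEq] at this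
  simp only [Fm, dif_pos hi, dif_pos h2, this.2]

lemma Fm_whisk (hM : IsMatching E M) (hne : ∀ i ∈ Finset.Icc 1 n, (Nbr E i).Nonempty) {i j : ℕ} (hij : Sum.inr (Sum.inl (i, j)) ∈ M)
    (hi : i ∈ Finset.Icc 1 n) : Fm n E M hne i = j := by
  have h2 : ¬∃ j', Sum.inl (i, j') ∈ M := by
    rintro ⟨j', hj'⟩
    exact absurd (M_uniqL hM _ hj' _ hij (by simp [leftV]) (by simp [leftV]))
      (by simp)
  have h3 : ∃ j', Sum.inr (Sum.inl (i, j')) ∈ M := ⟨j, hij⟩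
  have hch := h3.choose_spec
  have := M_uniqL hM _ hch _ hij (by simp [leftV]) (by simp [leftV])
  simp only [Sum.inr.injEq, Sum.inl.injEq, Prod.mk.injEq] at this
  simp only [Fm, dif_pos hi, dif_neg h2, dif_pos h3, this.2]

lemma Fm_cases (hM : IsMatching E M) (hne : ∀ i ∈ Finset.Icc 1 n, (Nbr E i).Nonempty) {i : ℕ} (hi : i ∈ Finset.Icc 1 n) :
    Sum.inl (i, Fm n E M hne i) ∈ M ∨ Sum.inr (Sum.inl (i, Fm n E M hne i)) ∈ M ∨
      ((∀ j, Sum.inl (i, j) ∉ M) ∧ (∀ j, Sum.inr (Sum.inl (i, j)) ∉ M) ∧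
        ¬∃ j' ∈ Nbr E i, j' < Fm n E M hne i) := by
  by_cases h2 : ∃ j, Sum.inl (i, j) ∈ M
  · left
    rw [Fm_inl hM hne h2.choose_spec hi]
    exact h2.choose_spec
  by_cases h3 : ∃ j, Sum.inr (Sum.inl (i, j)) ∈ M
  · right; left
    rw [Fm_whisk hM hne h3.choose_spec hi]
    exact h3.choose_spec
  · right; right
    refine ⟨fun j hj => h2 ⟨j, hj⟩, fun j hj => h3 ⟨j, hj⟩, ?_⟩
    rintro ⟨j', hj', hlt⟩
    have : Fm n E M hne i = (Nbr E i).min' (hne i hi) := by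
      simp only [Fm, dif_pos hi, dif_neg h2, dif_neg h3]
    rw [this] at hlt
    exact absurd hlt (not_lt.mpr ((Nbr E i).min'_le j' hj'))

lemma Fm_mem (hM : IsMatching E M) (hne : ∀ i ∈ Finset.Icc 1 n, (Nbr E i).Nonempty) {i : ℕ} (hi : i ∈ Finset.Icc 1 n) (hWE : ∀ e ∈ M, IsWEdge E e) :
    (i, Fm n E M hne i) ∈ E := by
  rcases Fm_cases hM hne hi with h | h | h
  · exact hWE _ h
  · exact (hWE _ h).1
  · have : Fm n E M hne i = (Nbr E i).min' (hne i hi) := by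
      simp only [Fm, dif_pos hi, dif_neg (fun hc : ∃ j, Sum.inl (i, j) ∈ M => h.1 _ hc.choose_spec),
        dif_neg (fun hc : ∃ j, Sum.inr (Sum.inl (i, j)) ∈ M => h.2.1 _ hc.choose_spec)]
    rw [this]
    exact mem_Nbr.mp ((Nbr E i).min'_mem (hne i hi))

lemma Gm_inl (hM : IsMatching E M) (hne' : ∀ j ∈ Finset.Icc 1 m, (Nbr' E j).Nonempty) {i j : ℕ} (hij : Sum.inl (i, j) ∈ M) (hj : j ∈ Finset.Icc 1 m) :
    Gm m E M hne' j = i := by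
  have h2 : ∃ i', Sum.inl (i', j) ∈ M := ⟨i, hij⟩
  have hch := h2.choose_spec
  have := M_uniqR hM _ hch _ hij (by simp [rightV]) (by simp [rightV])
  simp only [Sum.inl.injEq, Prod.mk.injEq] at this
  simp only [Gm, dif_pos hj, dif_pos h2, this.1]

lemma Gm_whisk (hM : IsMatching E M) (hne' : ∀ j ∈ Finset.Icc 1 m, (Nbr' E j).Nonempty) {i j : ℕ} (hij : Sum.inr (Sum.inr (j, i)) ∈ M)
    (hj : j ∈ Finset.Icc 1 m) : Gm m E M hne' j = i := by
  have h2 : ¬∃ i', Sum.inl (i', j) ∈ M := by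
    rintro ⟨i', hi'⟩
    exact absurd (M_uniqR hM _ hi' _ hij (by simp [rightV]) (by simp [rightV]))
      (by simp)
  have h3 : ∃ i', Sum.inr (Sum.inr (j, i')) ∈ M := ⟨i, hij⟩
  have hch := h3.choose_spec
  have := M_uniqR hM _ hch _ hij (by simp [rightV]) (by simp [rightV])
  simp only [Sum.inr.injEq, Prod.mk.injEq] at this
  simp only [Gm, dif_pos hj, dif_neg h2, dif_pos h3, this.2]

lemma Gm_cases (hM : IsMatching E M) (hne' : ∀ j ∈ Finset.Icc 1 m, (Nbr' E j).Nonempty) {j : ℕ} (hj : j ∈ Finset.Icc 1 m) :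
    Sum.inl (Gm m E M hne' j, j) ∈ M ∨ Sum.inr (Sum.inr (j, Gm m E M hne' j)) ∈ M ∨
      ((∀ i, Sum.inl (i, j) ∉ M) ∧ (∀ i, Sum.inr (Sum.inr (j, i)) ∉ M) ∧
        ¬∃ i' ∈ Nbr' E j, Gm m E M hne' j < i') := by
  by_cases h2 : ∃ i, Sum.inl (i, j) ∈ M
  · left
    rw [Gm_inl hM hne' h2.choose_spec hj]
    exact h2.choose_spec
  by_cases h3 : ∃ i, Sum.inr (Sum.inr (j, i)) ∈ M
  · right; left
    rw [Gm_whisk hM hne' h3.choose_spec hj]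
    exact h3.choose_spec
  · right; right
    refine ⟨fun i hi => h2 ⟨i, hi⟩, fun i hi => h3 ⟨i, hi⟩, ?_⟩
    rintro ⟨i', hi', hlt⟩
    have : Gm m E M hne' j = (Nbr' E j).max' (hne' j hj) := by
      simp only [Gm, dif_pos hj, dif_neg h2, dif_neg h3]
    rw [this] at hlt
    exact absurd hlt (not_lt.mpr ((Nbr' E j).le_max' i' hi'))

lemma Gm_mem (hM : IsMatching E M) (hne' : ∀ j ∈ Finset.Icc 1 m, (Nbr' E j).Nonempty) {j : ℕ} (hj : j ∈ Finset.Icc 1 m) (hWE : ∀ e ∈ M, IsWEdge E e) :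
    (Gm m E M hne' j, j) ∈ E := by
  rcases Gm_cases hM hne' hj with h | h | h
  · exact hWE _ h
  · exact (hWE _ h).1
  · have : Gm m E M hne' j = (Nbr' E j).max' (hne' j hj) := by
      simp only [Gm, dif_pos hj, dif_neg (fun hc : ∃ i, Sum.inl (i, j) ∈ M => h.1 _ hc.choose_spec),
        dif_neg (fun hc : ∃ i, Sum.inr (Sum.inr (j, i)) ∈ M => h.2.1 _ hc.choose_spec)]
    rw [this]
    exact mem_Nbr'.mp ((Nbr' E j).max'_mem (hne' j hj))

end Surj
section Surj2
variable {n m : ℕ} {E : Finset (ℕ × ℕ)}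

lemma psi_surj (hE : ∀ p ∈ E, 1 ≤ p.1 ∧ p.1 ≤ n ∧ 1 ≤ p.2 ∧ p.2 ≤ m)
    (hdegS : ∀ i ∈ Finset.Icc 1 n, 2 ≤ (Nbr E i).card)
    (hdegT : ∀ j ∈ Finset.Icc 1 m, 2 ≤ (Nbr' E j).card)
    {M : Set WEdge} (hM : IsMatching E M) : ∃ v : CliqueVec n m E, psi v = M := by
  classical
  have hne : ∀ i ∈ Finset.Icc 1 n, (Nbr E i).Nonempty := fun i hi =>
    Finset.card_pos.mp (by have := hdegS i hi; omega)
  have hne' : ∀ j ∈ Finset.Icc 1 m, (Nbr' E j).Nonempty := fun j hj =>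
    Finset.card_pos.mp (by have := hdegT j hj; omega)
  set F := Fm n E M hne with hF_def
  set G := Gm m E M hne' with hG_def
  set S : ℕ × ℕ → Bool := fun p =>
    decide (p ∈ E ∧ F p.1 = p.2 ∧ G p.2 = p.1 ∧ Sum.inl p ∉ M) with hS_def
  have hS_iff : ∀ p : ℕ × ℕ,
      S p = true ↔ (p ∈ E ∧ F p.1 = p.2 ∧ G p.2 = p.1 ∧ Sum.inl p ∉ M) := by
    intro p
    rw [hS_def]
    simp only [decide_eq_true_eq]
  have hS_false : ∀ p : ℕ × ℕ,
      S p = false ↔ ¬(p ∈ E ∧ F p.1 = p.2 ∧ G p.2 = p.1 ∧ Sum.inl p ∉ M) := by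
    intro p
    rw [← hS_iff p]
    constructor
    · intro h hc
      rw [h] at hc
      exact absurd hc (by simp)
    · intro h
      rcases Bool.eq_false_or_eq_true (S p) with h2 | h2
      · exact absurd h2 h
      · exact h2
  have hIccA : ∀ p ∈ E, p.1 ∈ Finset.Icc 1 n := fun p hp =>
    Finset.mem_Icc.mpr ⟨(hE p hp).1, (hE p hp).2.1⟩
  have hIccB : ∀ p ∈ E, p.2 ∈ Finset.Icc 1 m := fun p hp =>
    Finset.mem_Icc.mpr ⟨(hE p hp).2.2.1, (hE p hp).2.2.2⟩
  refine ⟨⟨F, G, S, fun i hi => Fm_mem hM hne hi hM.1,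
      fun j hj => Gm_mem hM hne' hj hM.1,
      fun p hp hs => ⟨((hS_iff p).mp hs).2.1, ((hS_iff p).mp hs).2.2.1⟩,
      fun i hi => by simp only [hF_def, Fm, dif_neg hi],
      fun j hj => by simp only [hG_def, Gm, dif_neg hj],
      fun p hp => (hS_false p).mpr fun hc => hp hc.1⟩, ?_⟩
  ext e
  rcases e with ⟨a, b⟩ | ⟨a, b⟩ | ⟨b, a⟩
  · rw [(show ∀ (s : Set WEdge) x, x ∈ s ↔ s x from fun _ _ => Iff.rfl), show (psi _ (Sum.inl (a, b)) : Prop) = (Sum.inl (a, b) ∈ psi _) from rfl]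
    rw [lemA]
    constructor
    · rintro ⟨hpE, hf, hg, hs⟩
      have := (hS_false (a, b)).mp hs
      by_contra hmem
      exact this ⟨hpE, hf, hg, hmem⟩
    · intro he
      have hpE : (a, b) ∈ E := hM.1 _ he
      refine ⟨hpE, Fm_inl hM hne he (hIccA _ hpE), Gm_inl hM hne' he (hIccB _ hpE), ?_⟩
      exact (hS_false (a, b)).mpr fun hc => hc.2.2.2 he
  · rw [(show ∀ (s : Set WEdge) x, x ∈ s ↔ s x from fun _ _ => Iff.rfl),
      show (psi _ (Sum.inr (Sum.inl (a, b))) : Prop) = (Sum.inr (Sum.inl (a, b)) ∈ psi _)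
        from rfl, lemB _ hE]
    constructor
    · rintro ⟨hIcc, hf, hex, himp⟩
      replace hf : F a = b := hf
      replace himp : G b = a → S (a, b) = true := himp
      rcases Fm_cases hM hne hIcc with h | h | h
      · rw [hF_def] at hf
        rw [hf] at h
        have hpE : (a, b) ∈ E := hM.1 _ h
        have hg : G b = a := Gm_inl hM hne' h (hIccB _ hpE)
        have := (hS_iff (a, b)).mp (himp hg)
        exact absurd h this.2.2.2
      · rw [hF_def] at hf
        rwa [hf] at h
      · rw [hF_def] at hf
        rw [hf] at h
        exact absurd hex h.2.2
    · intro he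
      obtain ⟨hpE, hex⟩ : (a, b) ∈ E ∧ ∃ j' ∈ Nbr E a, j' < b := hM.1 _ he
      have hIcc := hIccA _ hpE
      refine ⟨hIcc, Fm_whisk hM hne he hIcc, hex, fun hg => ?_⟩
      refine (hS_iff (a, b)).mpr ⟨hpE, Fm_whisk hM hne he hIcc, hg, fun hmem => ?_⟩
      have := M_uniqL hM _ hmem _ he (by simp [leftV]) (by simp [leftV])
      simp at this
  · rw [(show ∀ (s : Set WEdge) x, x ∈ s ↔ s x from fun _ _ => Iff.rfl),
      show (psi _ (Sum.inr (Sum.inr (b, a))) : Prop) = (Sum.inr (Sum.inr (b, a)) ∈ psi _)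
        from rfl, lemC _ hE]
    constructor
    · rintro ⟨hIcc, hg, hex, himp⟩
      replace hg : G b = a := hg
      replace himp : F a = b → S (a, b) = true := himp
      rcases Gm_cases hM hne' hIcc with h | h | h
      · rw [hG_def] at hg
        rw [hg] at h
        have hpE : (a, b) ∈ E := hM.1 _ h
        have hf : F a = b := Fm_inl hM hne h (hIccA _ hpE)
        have := (hS_iff (a, b)).mp (himp hf)
        exact absurd h this.2.2.2
      · rw [hG_def] at hg
        rwa [hg] at h
      · rw [hG_def] at hg
        rw [hg] at h
        exact absurd hex h.2.2
    · intro he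
      obtain ⟨hpE, hex⟩ : (a, b) ∈ E ∧ ∃ i' ∈ Nbr' E b, a < i' := hM.1 _ he
      have hIcc := hIccB _ hpE
      refine ⟨hIcc, Gm_whisk hM hne' he hIcc, hex, fun hf => ?_⟩
      refine (hS_iff (a, b)).mpr ⟨hpE, hf, Gm_whisk hM hne' he hIcc, fun hmem => ?_⟩
      have := M_uniqR hM _ hmem _ he (by simp [rightV]) (by simp [rightV])
      simp at this

end Surj2

/-- The matching map `ψ` is a bijection from clique vectors onto matchings of `W(H)`. -/
theorem psi_bijection (n m : ℕ) (hn : 1 ≤ n) (hm : 1 ≤ m) (E : Finset (ℕ × ℕ))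
    (hE : ∀ p ∈ E, 1 ≤ p.1 ∧ p.1 ≤ n ∧ 1 ≤ p.2 ∧ p.2 ≤ m)
    (hdegS : ∀ i ∈ Finset.Icc 1 n, 2 ≤ (Nbr E i).card)
    (hdegT : ∀ j ∈ Finset.Icc 1 m, 2 ≤ (Nbr' E j).card) :
    (∀ v : CliqueVec n m E, IsMatching E (psi v)) ∧
    Function.Injective (psi : CliqueVec n m E → Set WEdge) ∧
    (∀ M : Set WEdge, IsMatching E M → ∃ v : CliqueVec n m E, psi v = M) := by
  exact ⟨fun v => psi_isMatching v hE, psi_inj hE, fun M hM => psi_surj hE hdegS hdegT hM⟩
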